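/- Let f(z) = z + a_2 z² + a_3 z³ + ⋯ be holomorphic on D with f' nonvanishing, f(z) ≠ 0 for z ≠ 0, and Re(f(z)/(z f'(z))) ≥ 0 for all z ∈ D ∖ {0} (f is starlike). Then |2a_3 - a_2²| ≤ 2. -/

import Mathlib

open Complex Metric

lemma schwarz_pick_center {h : ℂ → ℂ} (hd : DifferentiableOn ℂ h (ball (0:ℂ) 1))
    (hb : ∀ z ∈ ball (0:ℂ) 1, ‖h z‖ ≤ 1) :
    ‖deriv h 0‖ ≤ 1 - ‖h 0‖ ^ 2 := by
  have h0B : (0:ℂ) ∈ ball (0:ℂ) 1 := mem_ball_self one_pos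
  by_cases hc : ∃ z₀ ∈ ball (0:ℂ) 1, ‖h z₀‖ = 1
  · obtain ⟨z₀, hz₀, hn⟩ := hc
    have hmax : IsMaxOn (norm ∘ h) (ball (0:ℂ) 1) z₀ := fun z hz => by
      simp only [Function.comp_apply, Set.mem_setOf_eq, hn]
      exact hb z hz
    have hconst := Complex.eqOn_of_isPreconnected_of_isMaxOn_norm
      (convex_ball _ _).isPreconnected isOpen_ball hd hz₀ hmax
    have h00 : h 0 = h z₀ := hconst h0B
    have hder : deriv h 0 = 0 := by
      have hev : h =ᶠ[nhds (0:ℂ)] fun _ => h z₀ :=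
        Filter.eventuallyEq_of_mem (isOpen_ball.mem_nhds h0B) (fun z hz => hconst hz)
      rw [hev.deriv_eq, deriv_const]
    rw [hder, h00, hn]
    simp
  · push_neg at hc
    have hlt : ∀ z ∈ ball (0:ℂ) 1, ‖h z‖ < 1 := fun z hz => lt_of_le_of_ne (hb z hz) (hc z hz)
    set a := h 0 with ha
    have halt : ‖a‖ < 1 := hlt 0 h0B
    have key : ∀ w₁ w₂ : ℂ, Complex.normSq (1 - (starRingEnd ℂ) w₁ * w₂) -
        Complex.normSq (w₂ - w₁) = (1 - Complex.normSq w₁) * (1 - Complex.normSq w₂) := by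
      intro w₁ w₂
      simp only [Complex.normSq_apply, Complex.sub_re, Complex.sub_im, Complex.mul_re,
        Complex.mul_im, Complex.conj_re, Complex.conj_im, Complex.one_re, Complex.one_im]
      ring
    have hden : ∀ w : ℂ, ‖w‖ < 1 → 1 - (starRingEnd ℂ) a * w ≠ 0 := by
      intro w hw hzero
      have h1 : ‖(starRingEnd ℂ) a * w‖ < 1 := by
        rw [norm_mul, RCLike.norm_conj]
        calc ‖a‖ * ‖w‖ ≤ 1 * ‖w‖ := by nlinarith [norm_nonneg (w:ℂ), norm_nonneg (a:ℂ)]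
        _ < 1 := by simpa using hw
      have : (1:ℂ) = (starRingEnd ℂ) a * w := by linear_combination hzero
      rw [← this] at h1
      simp at h1
    have hφlt : ∀ w : ℂ, ‖w‖ < 1 → ‖(w - a) / (1 - (starRingEnd ℂ) a * w)‖ < 1 := by
      intro w hw
      have hd0 : (0:ℝ) < ‖1 - (starRingEnd ℂ) a * w‖ := norm_pos_iff.2 (hden w hw)
      rw [norm_div, div_lt_one hd0]
      refine lt_of_pow_lt_pow_left₀ 2 (norm_nonneg _) ?_
      have h1 : ‖w - a‖ ^ 2 = Complex.normSq (w - a) := by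
        rw [← Complex.sq_norm]
      have h2 : ‖1 - (starRingEnd ℂ) a * w‖ ^ 2 = Complex.normSq (1 - (starRingEnd ℂ) a * w) := by
        rw [← Complex.sq_norm]
      have hna : ‖a‖ = ‖a‖ := rfl
      have hnw : ‖w‖ = ‖w‖ := rfl
      have h3 : Complex.normSq a < 1 := by
        have := Complex.sq_norm a; rw [hna] at halt; nlinarith [norm_nonneg a]
      have h4 : Complex.normSq w < 1 := by
        have := Complex.sq_norm w; rw [hnw] at hw; nlinarith [norm_nonneg w]
      have := key a w
      rw [h1, h2]
      nlinarith
    set k : ℂ → ℂ := fun z => (h z - a) / (1 - (starRingEnd ℂ) a * h z) with hk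
    have hdenz : ∀ z ∈ ball (0:ℂ) 1, 1 - (starRingEnd ℂ) a * h z ≠ 0 :=
      fun z hz => hden (h z) (hlt z hz)
    have hkd : DifferentiableOn ℂ k (ball (0:ℂ) 1) := by
      apply DifferentiableOn.div
      · exact hd.sub_const a
      · exact (differentiableOn_const 1).sub ((differentiableOn_const _).mul hd)
      · exact hdenz
    have hk0 : k 0 = 0 := by
      simp [hk, ← ha]
    have hkmaps : Set.MapsTo k (ball (0:ℂ) 1) (ball (0:ℂ) 1) := by
      intro z hz
      rw [mem_ball_zero_iff]
      exact hφlt (h z) (hlt z hz)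
    have hschwarz : ‖deriv k 0‖ ≤ 1 :=
      Complex.norm_deriv_le_one_of_mapsTo_ball hkd
        (by rw [hk0]; exact hkmaps.mono_right ball_subset_closedBall) one_pos
    have hhd0 : DifferentiableAt ℂ h 0 := hd.differentiableAt (isOpen_ball.mem_nhds h0B)
    have hderk : deriv k 0 = deriv h 0 / (1 - (starRingEnd ℂ) a * a) := by
      have Hh : HasDerivAt h (deriv h 0) 0 := hhd0.hasDerivAt
      have Hnum : HasDerivAt (fun z => h z - a) (deriv h 0) 0 := Hh.sub_const a
      have Hden : HasDerivAt (fun z => 1 - (starRingEnd ℂ) a * h z)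
          (-((starRingEnd ℂ) a * deriv h 0)) 0 := (Hh.const_mul _).const_sub 1
      have hne : (1 - (starRingEnd ℂ) a * h 0) ≠ 0 := hdenz 0 h0B
      have : deriv k 0 = _ := (Hnum.div Hden hne).deriv
      rw [this, ← ha]
      rw [← ha] at hne
      field_simp
      ring
    have hre : (1 : ℂ) - (starRingEnd ℂ) a * a = ((1 - Complex.normSq a : ℝ) : ℂ) := by
      rw [← Complex.normSq_eq_conj_mul_self]
      push_cast
      ring
    have hpos : (0:ℝ) < 1 - Complex.normSq a := by
      have := Complex.sq_norm a
      have hna : ‖a‖ = ‖a‖ := rfl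
      rw [hna] at halt
      nlinarith [norm_nonneg a]
    have : ‖deriv h 0‖ = ‖deriv k 0‖ * (1 - Complex.normSq a) := by
      rw [hderk, norm_div, hre]
      rw [Complex.norm_of_nonneg hpos.le]
      field_simp
    rw [this]
    have h5 : ‖a‖^2 = Complex.normSq a := by rw [← Complex.sq_norm]
    nlinarith


theorem stmt_9 (f : ℂ → ℂ) (hf : DifferentiableOn ℂ f (ball (0:ℂ) 1))
    (h0 : f 0 = 0) (h1 : deriv f 0 = 1)
    (hf' : ∀ z ∈ ball (0:ℂ) 1, deriv f z ≠ 0)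
    (hfz : ∀ z ∈ ball (0:ℂ) 1, z ≠ 0 → f z ≠ 0)
    (a : ℕ → ℂ) (ha : ∀ n, a n = iteratedDeriv n f 0 / (Nat.factorial n))
    (hstar : ∀ z ∈ ball (0:ℂ) 1, z ≠ 0 → 0 ≤ (f z / (z * deriv f z)).re) :
    ‖2 * a 3 - a 2 ^ 2‖ ≤ 2 := by
  have hBo : IsOpen (ball (0:ℂ) 1) := isOpen_ball
  have h0B : (0:ℂ) ∈ ball (0:ℂ) 1 := mem_ball_self one_pos
  have hfa : AnalyticOnNhd ℂ f (ball (0:ℂ) 1) := hf.analyticOnNhd hBo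
  set g : ℂ → ℂ := dslope f 0 with hgdef
  have hgz : ∀ z : ℂ, z ≠ 0 → g z = f z / z := by
    intro z hz
    rw [hgdef, dslope_of_ne _ hz, slope_def_field, h0, sub_zero, sub_zero]
  have hg0 : g 0 = 1 := by rw [hgdef, dslope_same]; exact h1
  have hga : AnalyticOnNhd ℂ g (ball (0:ℂ) 1) := by
    intro z hz
    rcases eq_or_ne z 0 with rfl | hzne
    · obtain ⟨pf, hpf⟩ := hfa 0 h0B
      exact ⟨pf.fslope, hpf.has_fpower_series_dslope_fslope⟩
    · refine ((hfa z hz).div analyticAt_id hzne).congr ?_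
      filter_upwards [eventually_ne_nhds hzne] with w hw
      exact (hgz w hw).symm
  have hgne : ∀ z ∈ ball (0:ℂ) 1, g z ≠ 0 := by
    intro z hz
    rcases eq_or_ne z 0 with rfl | hzne
    · rw [hg0]; exact one_ne_zero
    · rw [hgz z hzne]
      exact div_ne_zero (hfz z hz hzne) hzne
  set f1 : ℂ → ℂ := deriv f with hf1def
  have hf1a : AnalyticOnNhd ℂ f1 (ball (0:ℂ) 1) := hfa.deriv
  set p : ℂ → ℂ := fun z => f1 z / g z with hpdef
  have hpa : AnalyticOnNhd ℂ p (ball (0:ℂ) 1) := fun z hz =>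
    (hf1a z hz).div (hga z hz) (hgne z hz)
  have hp0 : p 0 = 1 := by rw [hpdef]; simp [hg0, ← hf1def, h1]
  have hpfz : ∀ z ∈ ball (0:ℂ) 1, z ≠ 0 → p z * f z = z * f1 z := by
    intro z hz hzne
    have h4 := hfz z hz hzne
    rw [hpdef]
    simp only
    rw [hgz z hzne]
    field_simp
  have hpne : ∀ z ∈ ball (0:ℂ) 1, p z ≠ 0 := fun z hz =>
    div_ne_zero (hf' z hz) (hgne z hz)
  have hpre : ∀ z ∈ ball (0:ℂ) 1, 0 ≤ (p z).re := by
    intro z hz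
    rcases eq_or_ne z 0 with rfl | hzne
    · rw [hp0]; norm_num
    · have hinv : (p z)⁻¹ = f z / (z * f1 z) := by
        have h2 := hpfz z hz hzne
        have h3 := hpne z hz
        have h4 := hfz z hz hzne
        rw [← h2, mul_comm (p z) (f z), div_mul_cancel_left₀ h4]
      have h5 : 0 ≤ ((p z)⁻¹).re := by rw [hinv]; exact hstar z hz hzne
      have h6 : ((p z)⁻¹).re = (p z).re / Complex.normSq (p z) := by
        rw [Complex.inv_re]
      have h7 : 0 < Complex.normSq (p z) := Complex.normSq_pos.2 (hpne z hz)
      rw [h6] at h5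
      calc (0:ℝ) ≤ (p z).re / Complex.normSq (p z) * Complex.normSq (p z) :=
            mul_nonneg h5 h7.le
        _ = (p z).re := div_mul_cancel₀ _ h7.ne'
  have hp1 : ∀ z ∈ ball (0:ℂ) 1, p z + 1 ≠ 0 := by
    intro z hz hcontra
    have : (p z + 1).re = 0 := by rw [hcontra]; simp
    rw [Complex.add_re, Complex.one_re] at this
    have := hpre z hz
    linarith
  set ω : ℂ → ℂ := fun z => (p z - 1) / (p z + 1) with hωdef
  have hωa : AnalyticOnNhd ℂ ω (ball (0:ℂ) 1) := fun z hz =>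
    ((hpa z hz).sub analyticAt_const).div ((hpa z hz).add analyticAt_const) (hp1 z hz)
  have hω0 : ω 0 = 0 := by rw [hωdef]; simp [hp0]
  have hωle : ∀ z ∈ ball (0:ℂ) 1, ‖ω z‖ ≤ 1 := by
    intro z hz
    rw [hωdef]
    simp only
    rw [norm_div]
    have hd0 : (0:ℝ) < ‖p z + 1‖ := norm_pos_iff.2 (hp1 z hz)
    rw [div_le_one hd0]
    have e1 : ‖p z - 1‖ ^ 2 = Complex.normSq (p z - 1) := by rw [← Complex.sq_norm]
    have e2 : ‖p z + 1‖ ^ 2 = Complex.normSq (p z + 1) := by rw [← Complex.sq_norm]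
    have e3 : Complex.normSq (p z + 1) - Complex.normSq (p z - 1) = 4 * (p z).re := by
      simp only [Complex.normSq_apply, Complex.add_re, Complex.add_im, Complex.sub_re,
        Complex.sub_im, Complex.one_re, Complex.one_im]
      ring
    have := hpre z hz
    nlinarith [norm_nonneg (p z - 1), norm_nonneg (p z + 1)]
  have hωd : DifferentiableOn ℂ ω (ball (0:ℂ) 1) := hωa.differentiableOn
  have hωmaps : Set.MapsTo ω (ball (0:ℂ) 1) (ball (0:ℂ) 1) := by
    intro z hz
    rw [mem_ball_zero_iff]
    rcases lt_or_eq_of_le (hωle z hz) with hlt | heq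
    · exact hlt
    · exfalso
      have hmax : IsMaxOn (norm ∘ ω) (ball (0:ℂ) 1) z := fun w hw => by
        simp only [Function.comp_apply, Set.mem_setOf_eq, heq]
        exact hωle w hw
      have hconst := Complex.eqOn_of_isPreconnected_of_isMaxOn_norm
        (convex_ball _ _).isPreconnected hBo hωd hz hmax
      have h00 : ω 0 = ω z := hconst h0B
      rw [hω0] at h00
      rw [← h00] at heq
      simp at heq
  set h : ℂ → ℂ := dslope ω 0 with hhdef
  have hωmaps' : Set.MapsTo ω (ball (0:ℂ) 1) (ball (ω 0) 1) := by rwa [hω0]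
  have hhb : ∀ z ∈ ball (0:ℂ) 1, ‖h z‖ ≤ 1 := by
    intro z hz
    have := Complex.norm_dslope_le_div_of_mapsTo_ball hωd (hωmaps'.mono_right ball_subset_closedBall) hz
    simpa using this
  have hha : AnalyticOnNhd ℂ h (ball (0:ℂ) 1) := by
    intro z hz
    rcases eq_or_ne z 0 with rfl | hzne
    · obtain ⟨q, hq⟩ := hωa 0 h0B
      exact ⟨q.fslope, hq.has_fpower_series_dslope_fslope⟩
    · refine ((hωa z hz).div analyticAt_id hzne).congr ?_
      filter_upwards [eventually_ne_nhds hzne] with w hw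
      rw [hhdef, dslope_of_ne _ hw, slope_def_field, hω0, sub_zero, sub_zero]
      rfl
  have hkey : ‖deriv h 0‖ ≤ 1 - ‖h 0‖ ^ 2 := schwarz_pick_center hha.differentiableOn hhb
  obtain ⟨q, hq⟩ := hωa 0 h0B
  have hw1 : deriv ω 0 = q.coeff 1 := hq.deriv
  have hh0 : h 0 = deriv ω 0 := by rw [hhdef, dslope_same]
  have hhq : HasFPowerSeriesAt h q.fslope 0 := hq.has_fpower_series_dslope_fslope
  have hderh : deriv h 0 = q.coeff 2 := by
    exact hhq.deriv.trans (q.coeff_fslope)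
  have hw2 : deriv (deriv ω) 0 = 2 * q.coeff 2 := by
    obtain ⟨r, hr⟩ := hq
    have h2 := hr.factorial_smul (1:ℂ) 2
    have h3 : iteratedDeriv 2 ω 0 = iteratedFDeriv ℂ 2 ω 0 (fun _ => 1) :=
      iteratedDeriv_eq_iteratedFDeriv
    have h4 : (q 2) (fun _ => (1:ℂ)) = q.coeff 2 := rfl
    have h5 : iteratedDeriv 2 ω = deriv (deriv ω) := by
      rw [iteratedDeriv_succ, iteratedDeriv_one]
    rw [h4] at h2
    rw [← h3, h5] at h2
    rw [← h2]
    simp [Nat.factorial]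
  have ha2 : a 2 = deriv (deriv f) 0 / 2 := by
    rw [ha 2]
    have h5 : iteratedDeriv 2 f = deriv (deriv f) := by
      rw [iteratedDeriv_succ, iteratedDeriv_one]
    rw [h5]
    norm_num
  have ha3 : a 3 = deriv (deriv (deriv f)) 0 / 6 := by
    rw [ha 3]
    have h5 : iteratedDeriv 3 f = deriv (deriv (deriv f)) := by
      rw [iteratedDeriv_succ, iteratedDeriv_succ, iteratedDeriv_one]
    rw [h5]
    norm_num [Nat.factorial]
    -- rewrite a 2, a 3 in terms of f1
  have ha2' : a 2 = deriv f1 0 / 2 := by rw [ha2, hf1def]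
  have ha3' : a 3 = deriv (deriv f1) 0 / 6 := by rw [ha3, hf1def]
  -- HasDerivAt facts
  have hDf : ∀ z ∈ ball (0:ℂ) 1, HasDerivAt f (f1 z) z := fun z hz =>
    ((hfa z hz).differentiableAt).hasDerivAt
  have hDf1 : ∀ z ∈ ball (0:ℂ) 1, HasDerivAt f1 (deriv f1 z) z := fun z hz =>
    ((hf1a z hz).differentiableAt).hasDerivAt
  have hf2a : AnalyticOnNhd ℂ (deriv f1) (ball (0:ℂ) 1) := hf1a.deriv
  have hDf2 : ∀ z ∈ ball (0:ℂ) 1, HasDerivAt (deriv f1) (deriv (deriv f1) z) z := fun z hz =>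
    ((hf2a z hz).differentiableAt).hasDerivAt
  have hf3a : AnalyticOnNhd ℂ (deriv (deriv f1)) (ball (0:ℂ) 1) := hf2a.deriv
  have hDf3 : ∀ z ∈ ball (0:ℂ) 1, HasDerivAt (deriv (deriv f1)) (deriv (deriv (deriv f1)) z) z :=
    fun z hz => ((hf3a z hz).differentiableAt).hasDerivAt
  have hDω : ∀ z ∈ ball (0:ℂ) 1, HasDerivAt ω (deriv ω z) z := fun z hz =>
    ((hωa z hz).differentiableAt).hasDerivAt
  have hω1a : AnalyticOnNhd ℂ (deriv ω) (ball (0:ℂ) 1) := hωa.deriv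
  have hDω1 : ∀ z ∈ ball (0:ℂ) 1, HasDerivAt (deriv ω) (deriv (deriv ω) z) z := fun z hz =>
    ((hω1a z hz).differentiableAt).hasDerivAt
  have hω2a : AnalyticOnNhd ℂ (deriv (deriv ω)) (ball (0:ℂ) 1) := hω1a.deriv
  have hDω2 : ∀ z ∈ ball (0:ℂ) 1, HasDerivAt (deriv (deriv ω)) (deriv (deriv (deriv ω)) z) z :=
    fun z hz => ((hω2a z hz).differentiableAt).hasDerivAt
  -- the fundamental identity
  have E0 : Set.EqOn (fun z => z * f1 z * (1 - ω z)) (fun z => f z * (1 + ω z))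
      (ball (0:ℂ) 1) := by
    intro z hz
    simp only
    rcases eq_or_ne z 0 with rfl | hzne
    · simp [h0]
    · have hp1z := hp1 z hz
      have hPf := hpfz z hz hzne
      have hω_z : ω z = (p z - 1) / (p z + 1) := rfl
      have key : ∀ P F Z W : ℂ, P + 1 ≠ 0 → P * F = Z * W →
          Z * W * (1 - (P - 1)/(P + 1)) = F * (1 + (P - 1)/(P + 1)) := by
        intro P F Z W hP hPF
        field_simp
        linear_combination -2 * hPF
      rw [hω_z]
      exact key (p z) (f z) z (f1 z) hp1z hPf
  have derivEq : ∀ {u v : ℂ → ℂ}, Set.EqOn u v (ball (0:ℂ) 1) → ∀ z ∈ ball (0:ℂ) 1,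
      deriv u z = deriv v z := fun {u v} hE z hz =>
    (Filter.eventuallyEq_of_mem (hBo.mem_nhds hz) hE).deriv_eq
  -- first derivative
  have hL1 : ∀ z ∈ ball (0:ℂ) 1, deriv (fun w => w * f1 w * (1 - ω w)) z
      = (f1 z + z * deriv f1 z) * (1 - ω z) - (z * f1 z) * deriv ω z := by
    intro z hz
    have HA : HasDerivAt (fun w => w * f1 w) (1 * f1 z + z * deriv f1 z) z :=
      (hasDerivAt_id z).mul (hDf1 z hz)
    have HB : HasDerivAt (fun w => 1 - ω w) (-(deriv ω z)) z := (hDω z hz).const_sub 1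
    have := (HA.mul HB).deriv
    exact this.trans (by ring)
  have hR1 : ∀ z ∈ ball (0:ℂ) 1, deriv (fun w => f w * (1 + ω w)) z
      = f1 z * (1 + ω z) + f z * deriv ω z := by
    intro z hz
    have HB : HasDerivAt (fun w => 1 + ω w) (deriv ω z) z := (hDω z hz).const_add 1
    have := ((hDf z hz).mul HB).deriv
    exact this.trans (by ring)
  have E1 : Set.EqOn (fun z => (f1 z + z * deriv f1 z) * (1 - ω z) - (z * f1 z) * deriv ω z)
      (fun z => f1 z * (1 + ω z) + f z * deriv ω z) (ball (0:ℂ) 1) := by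
    intro z hz
    have := derivEq E0 z hz
    simp only
    rw [← hL1 z hz, ← hR1 z hz]
    exact this
  -- second derivative
  have hL2 : ∀ z ∈ ball (0:ℂ) 1,
      deriv (fun w => (f1 w + w * deriv f1 w) * (1 - ω w) - (w * f1 w) * deriv ω w) z
      = (deriv f1 z + (deriv f1 z + z * deriv (deriv f1) z)) * (1 - ω z)
        - (f1 z + z * deriv f1 z) * deriv ω z
        - ((f1 z + z * deriv f1 z) * deriv ω z + (z * f1 z) * deriv (deriv ω) z) := by
    intro z hz
    have HU : HasDerivAt (fun w => f1 w + w * deriv f1 w)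
        (deriv f1 z + (1 * deriv f1 z + z * deriv (deriv f1) z)) z :=
      (hDf1 z hz).add ((hasDerivAt_id z).mul (hDf2 z hz))
    have HB : HasDerivAt (fun w => 1 - ω w) (-(deriv ω z)) z := (hDω z hz).const_sub 1
    have HS : HasDerivAt (fun w => w * f1 w) (1 * f1 z + z * deriv f1 z) z :=
      (hasDerivAt_id z).mul (hDf1 z hz)
    have := ((HU.mul HB).sub (HS.mul (hDω1 z hz))).deriv
    exact this.trans (by ring)
  have hR2 : ∀ z ∈ ball (0:ℂ) 1,
      deriv (fun w => f1 w * (1 + ω w) + f w * deriv ω w) z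
      = (deriv f1 z * (1 + ω z) + f1 z * deriv ω z)
        + (f1 z * deriv ω z + f z * deriv (deriv ω) z) := by
    intro z hz
    have HB : HasDerivAt (fun w => 1 + ω w) (deriv ω z) z := (hDω z hz).const_add 1
    have := (((hDf1 z hz).mul HB).add ((hDf z hz).mul (hDω1 z hz))).deriv
    exact this.trans (by ring)
  have E2 : Set.EqOn
      (fun z => (deriv f1 z + (deriv f1 z + z * deriv (deriv f1) z)) * (1 - ω z)
        - (f1 z + z * deriv f1 z) * deriv ω z
        - ((f1 z + z * deriv f1 z) * deriv ω z + (z * f1 z) * deriv (deriv ω) z))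
      (fun z => (deriv f1 z * (1 + ω z) + f1 z * deriv ω z)
        + (f1 z * deriv ω z + f z * deriv (deriv ω) z)) (ball (0:ℂ) 1) := by
    intro z hz
    have := derivEq E1 z hz
    simp only
    rw [← hL2 z hz, ← hR2 z hz]
    exact this
  -- order-2 equation
  have eq2 : deriv f1 0 = 4 * deriv ω 0 := by
    have := E2 h0B
    simp only [zero_mul, mul_zero, add_zero, sub_zero, hω0, h0, h1, mul_one, zero_add] at this
    linear_combination this
  -- order-3 equation
  have eq3 : 2 * deriv (deriv f1) 0 = 9 * deriv f1 0 * deriv ω 0 + 6 * deriv (deriv ω) 0 := by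
    have hd3 := derivEq E2 0 h0B
    -- compute LHS derivative at 0
    have HL : deriv (fun z => (deriv f1 z + (deriv f1 z + z * deriv (deriv f1) z)) * (1 - ω z)
        - (f1 z + z * deriv f1 z) * deriv ω z
        - ((f1 z + z * deriv f1 z) * deriv ω z + (z * f1 z) * deriv (deriv ω) z)) 0
        = (deriv (deriv f1) 0 + (deriv (deriv f1) 0 + (1 * deriv (deriv f1) 0 + 0 * deriv (deriv (deriv f1)) 0))) * (1 - ω 0)
          + (deriv f1 0 + (deriv f1 0 + 0 * deriv (deriv f1) 0)) * (-(deriv ω 0))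
          - ((deriv f1 0 + (1 * deriv f1 0 + 0 * deriv (deriv f1) 0)) * deriv ω 0
             + (f1 0 + 0 * deriv f1 0) * deriv (deriv ω) 0)
          - ((deriv f1 0 + (1 * deriv f1 0 + 0 * deriv (deriv f1) 0)) * deriv ω 0
             + (f1 0 + 0 * deriv f1 0) * deriv (deriv ω) 0
             + ((1 * f1 0 + 0 * deriv f1 0) * deriv (deriv ω) 0
                + (0 * f1 0) * deriv (deriv (deriv ω)) 0)) := by
      have T1 : HasDerivAt (fun w => deriv f1 w + (deriv f1 w + w * deriv (deriv f1) w))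
          (deriv (deriv f1) 0 + (deriv (deriv f1) 0 + (1 * deriv (deriv f1) 0 + 0 * deriv (deriv (deriv f1)) 0))) 0 :=
        (hDf2 0 h0B).add ((hDf2 0 h0B).add ((hasDerivAt_id 0).mul (hDf3 0 h0B)))
      have HB : HasDerivAt (fun w => 1 - ω w) (-(deriv ω 0)) 0 := (hDω 0 h0B).const_sub 1
      have T2 : HasDerivAt (fun w => f1 w + w * deriv f1 w)
          (deriv f1 0 + (1 * deriv f1 0 + 0 * deriv (deriv f1) 0)) 0 :=
        (hDf1 0 h0B).add ((hasDerivAt_id 0).mul (hDf2 0 h0B))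
      have T3 : HasDerivAt (fun w => w * f1 w) (1 * f1 0 + 0 * deriv f1 0) 0 :=
        (hasDerivAt_id 0).mul (hDf1 0 h0B)
      have Hfull := (((T1.mul HB).sub (T2.mul (hDω1 0 h0B))).sub
        ((T2.mul (hDω1 0 h0B)).add (T3.mul (hDω2 0 h0B)))).deriv
      exact Hfull.trans (by ring)
    have HR : deriv (fun z => (deriv f1 z * (1 + ω z) + f1 z * deriv ω z)
        + (f1 z * deriv ω z + f z * deriv (deriv ω) z)) 0
        = (deriv (deriv f1) 0 * (1 + ω 0) + deriv f1 0 * deriv ω 0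
            + (deriv f1 0 * deriv ω 0 + f1 0 * deriv (deriv ω) 0))
          + (deriv f1 0 * deriv ω 0 + f1 0 * deriv (deriv ω) 0
            + (f1 0 * deriv (deriv ω) 0 + f 0 * deriv (deriv (deriv ω)) 0)) := by
      have HB : HasDerivAt (fun w => 1 + ω w) (deriv ω 0) 0 := (hDω 0 h0B).const_add 1
      have Hfull := ((((hDf2 0 h0B).mul HB).add (((hDf1 0 h0B).mul (hDω1 0 h0B)))).add
        (((hDf1 0 h0B).mul (hDω1 0 h0B)).add ((hDf 0 h0B).mul (hDω2 0 h0B)))).deriv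
      exact Hfull.trans (by ring)
    rw [HL, HR] at hd3
    rw [h0, h1, hω0] at hd3
    linear_combination hd3
  -- final combination
  have hb1 : deriv ω 0 = h 0 := hh0.symm
  have hb2 : deriv (deriv ω) 0 = 2 * deriv h 0 := by rw [hw2, hderh]
  have hval : 2 * a 3 - a 2 ^ 2 = 2 * ((h 0) ^ 2 + deriv h 0) := by
    rw [ha2', ha3', ← hb1]
    have hb2' : deriv h 0 = deriv (deriv ω) 0 / 2 := by rw [hb2]; ring
    rw [hb2']
    linear_combination (1/6 : ℂ) * eq3 + (deriv ω 0 / 2 - deriv f1 0 / 4) * eq2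
  rw [hval]
  have hn1 : ‖2 * ((h 0) ^ 2 + deriv h 0)‖ = 2 * ‖(h 0) ^ 2 + deriv h 0‖ := by
    rw [norm_mul]
    norm_num
  rw [hn1]
  have hn2 : ‖(h 0) ^ 2 + deriv h 0‖ ≤ ‖h 0‖ ^ 2 + ‖deriv h 0‖ := by
    calc ‖(h 0) ^ 2 + deriv h 0‖ ≤ ‖(h 0) ^ 2‖ + ‖deriv h 0‖ := norm_add_le _ _
      _ = ‖h 0‖ ^ 2 + ‖deriv h 0‖ := by rw [norm_pow]
  nlinarith [hkey, norm_nonneg (h 0), norm_nonneg (deriv h 0)]
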